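/- For every m ≥ 2 and n ≥ 3, the disjoint union of m copies of the triangular ladder TL_n admits a C₃-supermagic labeling with magic constant 14mn − 3m + 3. -/
import Mathlib

private lemma divmod_inj {m i₁ j₁ i₂ j₂ : ℕ} (h₁ : j₁ < m) (h₂ : j₂ < m)
    (h : m * i₁ + j₁ = m * i₂ + j₂) : i₁ = i₂ ∧ j₁ = j₂ := by
  have e1 : (m * i₁ + j₁) % m = j₁ := by rw [Nat.mul_add_mod]; exact Nat.mod_eq_of_lt h₁
  have e2 : (m * i₂ + j₂) % m = j₂ := by rw [Nat.mul_add_mod]; exact Nat.mod_eq_of_lt h₂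
  have hj : j₁ = j₂ := by rw [← e1, ← e2, h]
  subst hj
  have hm : 0 < m := lt_of_le_of_lt (Nat.zero_le _) h₁
  have h' : m * i₁ = m * i₂ := Nat.add_right_cancel h
  exact ⟨Nat.eq_of_mul_eq_mul_left hm h', rfl⟩

private def lab (m n : ℕ) :
    ((Fin m × Fin n) ⊕ (Fin m × Fin n)) ⊕
      ((Fin m × Fin n) ⊕ ((Fin m × Fin (n - 1)) ⊕
        ((Fin m × Fin (n - 1)) ⊕ (Fin m × Fin (n - 1))))) → ℕ
  | .inl (.inl (j, i)) => m * (i : ℕ) + (j : ℕ) + 1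
  | .inl (.inr (j, i)) => m * n + (m * (n - 1 - (i : ℕ)) + (j : ℕ)) + 1
  | .inr (.inl (j, i)) => 2 * m * n + m * (n - 1) + (m * (n - 1 - (i : ℕ)) + (m - 1 - (j : ℕ))) + 1
  | .inr (.inr (.inl (j, i))) => 3 * m * n + 2 * (m * (n - 1)) + (m * (n - 2 - (i : ℕ)) + (m - 1 - (j : ℕ))) + 1
  | .inr (.inr (.inr (.inl (j, i)))) => 3 * m * n + m * (n - 1) + (m * (i : ℕ) + (m - 1 - (j : ℕ))) + 1
  | .inr (.inr (.inr (.inr (j, i)))) => 2 * m * n + (m * (i : ℕ) + (m - 1 - (j : ℕ))) + 1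

set_option maxHeartbeats 3200000 in
/-- `mTLₙ` (m ≥ 2 copies of the triangular ladder `TLₙ`, n ≥ 3) is `C₃`-supermagic
with magic constant `14mn - 3m + 3`.
Vertices: `u`- and `v`-vertices `Fin m × Fin n`.
Edges: rungs `uᵢvᵢ` (`Fin m × Fin n`), `u`-path edges, `v`-path edges and
diagonals `uᵢ₊₁vᵢ` (each `Fin m × Fin (n-1)`).
The triangles are `{uᵢ, vᵢ, uᵢ₊₁}` and `{uᵢ₊₁, vᵢ, vᵢ₊₁}`. -/
theorem mTriangularLadder_C3_supermagic (m n : ℕ) (hm : 2 ≤ m) (hn : 3 ≤ n) :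
    ∃ f : ((Fin m × Fin n) ⊕ (Fin m × Fin n)) ⊕
          ((Fin m × Fin n) ⊕ ((Fin m × Fin (n - 1)) ⊕
            ((Fin m × Fin (n - 1)) ⊕ (Fin m × Fin (n - 1))))) → ℕ,
      Function.Injective f ∧
      Set.range f = Set.Icc 1 (2 * m * n + m * (4 * n - 3)) ∧
      (∀ x : (Fin m × Fin n) ⊕ (Fin m × Fin n), f (Sum.inl x) ≤ 2 * m * n) ∧
      (∀ (j : Fin m) (i : Fin (n - 1)),
        f (Sum.inl (Sum.inl (j, ⟨i.val, by have := i.isLt; omega⟩)))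
          + f (Sum.inl (Sum.inr (j, ⟨i.val, by have := i.isLt; omega⟩)))
          + f (Sum.inl (Sum.inl (j, ⟨i.val + 1, by have := i.isLt; omega⟩)))
          + f (Sum.inr (Sum.inl (j, ⟨i.val, by have := i.isLt; omega⟩)))
          + f (Sum.inr (Sum.inr (Sum.inl (j, i))))
          + f (Sum.inr (Sum.inr (Sum.inr (Sum.inr (j, i)))))
        = 14 * m * n - 3 * m + 3) ∧
      (∀ (j : Fin m) (i : Fin (n - 1)),
        f (Sum.inl (Sum.inl (j, ⟨i.val + 1, by have := i.isLt; omega⟩)))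
          + f (Sum.inl (Sum.inr (j, ⟨i.val, by have := i.isLt; omega⟩)))
          + f (Sum.inl (Sum.inr (j, ⟨i.val + 1, by have := i.isLt; omega⟩)))
          + f (Sum.inr (Sum.inr (Sum.inr (Sum.inr (j, i)))))
          + f (Sum.inr (Sum.inr (Sum.inr (Sum.inl (j, i)))))
          + f (Sum.inr (Sum.inl (j, ⟨i.val + 1, by have := i.isLt; omega⟩)))
        = 14 * m * n - 3 * m + 3) := by
  have hm0 : 0 < m := by omega
  have mono : ∀ i k : ℕ, i < k → m * i + m ≤ m * k := by
    intro i k h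
    have h2 : m * (i + 1) ≤ m * k := Nat.mul_le_mul_left m h
    simpa [Nat.mul_succ] using h2
  have e4 : m * (4 * n - 3) = m * n + 3 * (m * (n - 1)) := by
    rw [show 4 * n - 3 = n + 3 * (n - 1) from by omega]; ring
  have Hu : ∀ j i : ℕ, j < m → i < n →
      1 ≤ m * i + j + 1 ∧ m * i + j + 1 ≤ m * n := by
    intro j i hj hi
    have h1 := mono i n hi
    exact ⟨by linarith [Nat.zero_le (m * i)], by linarith⟩
  have Hv : ∀ j i : ℕ, j < m → i < n →
      m * n + 1 ≤ m * n + (m * (n - 1 - i) + j) + 1 ∧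
      m * n + (m * (n - 1 - i) + j) + 1 ≤ 2 * m * n := by
    intro j i hj hi
    have h1 := mono (n - 1 - i) n (by omega)
    exact ⟨by linarith [Nat.zero_le (m * (n - 1 - i) + j)], by linarith⟩
  have Hr : ∀ j i : ℕ, j < m → i < n →
      2 * m * n + m * (n - 1) + 1 ≤ 2 * m * n + m * (n - 1) + (m * (n - 1 - i) + (m - 1 - j)) + 1 ∧
      2 * m * n + m * (n - 1) + (m * (n - 1 - i) + (m - 1 - j)) + 1 ≤ 2 * m * n + m * (n - 1) + m * n := by
    intro j i hj hi
    have h1 := mono (n - 1 - i) n (by omega)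
    have h2 : m - 1 - j + 1 ≤ m := by omega
    exact ⟨by linarith [Nat.zero_le (m * (n - 1 - i) + (m - 1 - j))], by linarith⟩
  have Ha : ∀ j i : ℕ, j < m → i < n - 1 →
      3 * m * n + 2 * (m * (n - 1)) + 1 ≤
        3 * m * n + 2 * (m * (n - 1)) + (m * (n - 2 - i) + (m - 1 - j)) + 1 ∧
      3 * m * n + 2 * (m * (n - 1)) + (m * (n - 2 - i) + (m - 1 - j)) + 1 ≤
        3 * m * n + 3 * (m * (n - 1)) := by
    intro j i hj hi
    have h1 := mono (n - 2 - i) (n - 1) (by omega)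
    have h2 : m - 1 - j + 1 ≤ m := by omega
    exact ⟨by linarith [Nat.zero_le (m * (n - 2 - i) + (m - 1 - j))], by linarith⟩
  have Hb : ∀ j i : ℕ, j < m → i < n - 1 →
      3 * m * n + m * (n - 1) + 1 ≤ 3 * m * n + m * (n - 1) + (m * i + (m - 1 - j)) + 1 ∧
      3 * m * n + m * (n - 1) + (m * i + (m - 1 - j)) + 1 ≤ 3 * m * n + 2 * (m * (n - 1)) := by
    intro j i hj hi
    have h1 := mono i (n - 1) hi
    have h2 : m - 1 - j + 1 ≤ m := by omega
    exact ⟨by linarith [Nat.zero_le (m * i + (m - 1 - j))], by linarith⟩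
  have Hd : ∀ j i : ℕ, j < m → i < n - 1 →
      2 * m * n + 1 ≤ 2 * m * n + (m * i + (m - 1 - j)) + 1 ∧
      2 * m * n + (m * i + (m - 1 - j)) + 1 ≤ 2 * m * n + m * (n - 1) := by
    intro j i hj hi
    have h1 := mono i (n - 1) hi
    have h2 : m - 1 - j + 1 ≤ m := by omega
    exact ⟨by linarith [Nat.zero_le (m * i + (m - 1 - j))], by linarith⟩
  have hinj : Function.Injective (lab m n) := by
    intro x y hxy
    rcases x with ((⟨a,b⟩|⟨a,b⟩)|(⟨a,b⟩|(⟨a,b⟩|(⟨a,b⟩|⟨a,b⟩)))) <;> rcases y with ((⟨c,d⟩|⟨c,d⟩)|(⟨c,d⟩|(⟨c,d⟩|(⟨c,d⟩|⟨c,d⟩)))) <;> simp only [lab] at hxy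
    · have ha := a.isLt; have hb := b.isLt; have hc := c.isLt; have hd := d.isLt
      obtain ⟨hI, hJ⟩ := divmod_inj a.isLt c.isLt (Nat.add_right_cancel hxy)
      simp only [Sum.inl.injEq, Sum.inr.injEq, Prod.mk.injEq]
      exact ⟨Fin.ext (by omega), Fin.ext (by omega)⟩
    · exfalso
      have f1 := Hu (a:ℕ) (b:ℕ) a.isLt b.isLt
      have f2 := Hv (c:ℕ) (d:ℕ) c.isLt d.isLt
      linarith [f1.1, f1.2, f2.1, f2.2, Nat.zero_le (m * n), Nat.zero_le (m * (n - 1))]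
    · exfalso
      have f1 := Hu (a:ℕ) (b:ℕ) a.isLt b.isLt
      have f2 := Hr (c:ℕ) (d:ℕ) c.isLt d.isLt
      linarith [f1.1, f1.2, f2.1, f2.2, Nat.zero_le (m * n), Nat.zero_le (m * (n - 1))]
    · exfalso
      have f1 := Hu (a:ℕ) (b:ℕ) a.isLt b.isLt
      have f2 := Ha (c:ℕ) (d:ℕ) c.isLt d.isLt
      linarith [f1.1, f1.2, f2.1, f2.2, Nat.zero_le (m * n), Nat.zero_le (m * (n - 1))]
    · exfalso
      have f1 := Hu (a:ℕ) (b:ℕ) a.isLt b.isLt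
      have f2 := Hb (c:ℕ) (d:ℕ) c.isLt d.isLt
      linarith [f1.1, f1.2, f2.1, f2.2, Nat.zero_le (m * n), Nat.zero_le (m * (n - 1))]
    · exfalso
      have f1 := Hu (a:ℕ) (b:ℕ) a.isLt b.isLt
      have f2 := Hd (c:ℕ) (d:ℕ) c.isLt d.isLt
      linarith [f1.1, f1.2, f2.1, f2.2, Nat.zero_le (m * n), Nat.zero_le (m * (n - 1))]
    · exfalso
      have f1 := Hv (a:ℕ) (b:ℕ) a.isLt b.isLt
      have f2 := Hu (c:ℕ) (d:ℕ) c.isLt d.isLt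
      linarith [f1.1, f1.2, f2.1, f2.2, Nat.zero_le (m * n), Nat.zero_le (m * (n - 1))]
    · have ha := a.isLt; have hb := b.isLt; have hc := c.isLt; have hd := d.isLt
      obtain ⟨hI, hJ⟩ := divmod_inj a.isLt c.isLt (Nat.add_left_cancel (Nat.add_right_cancel hxy))
      simp only [Sum.inl.injEq, Sum.inr.injEq, Prod.mk.injEq]
      exact ⟨Fin.ext (by omega), Fin.ext (by omega)⟩
    · exfalso
      have f1 := Hv (a:ℕ) (b:ℕ) a.isLt b.isLt
      have f2 := Hr (c:ℕ) (d:ℕ) c.isLt d.isLt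
      linarith [f1.1, f1.2, f2.1, f2.2, Nat.zero_le (m * n), Nat.zero_le (m * (n - 1))]
    · exfalso
      have f1 := Hv (a:ℕ) (b:ℕ) a.isLt b.isLt
      have f2 := Ha (c:ℕ) (d:ℕ) c.isLt d.isLt
      linarith [f1.1, f1.2, f2.1, f2.2, Nat.zero_le (m * n), Nat.zero_le (m * (n - 1))]
    · exfalso
      have f1 := Hv (a:ℕ) (b:ℕ) a.isLt b.isLt
      have f2 := Hb (c:ℕ) (d:ℕ) c.isLt d.isLt
      linarith [f1.1, f1.2, f2.1, f2.2, Nat.zero_le (m * n), Nat.zero_le (m * (n - 1))]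
    · exfalso
      have f1 := Hv (a:ℕ) (b:ℕ) a.isLt b.isLt
      have f2 := Hd (c:ℕ) (d:ℕ) c.isLt d.isLt
      linarith [f1.1, f1.2, f2.1, f2.2, Nat.zero_le (m * n), Nat.zero_le (m * (n - 1))]
    · exfalso
      have f1 := Hr (a:ℕ) (b:ℕ) a.isLt b.isLt
      have f2 := Hu (c:ℕ) (d:ℕ) c.isLt d.isLt
      linarith [f1.1, f1.2, f2.1, f2.2, Nat.zero_le (m * n), Nat.zero_le (m * (n - 1))]
    · exfalso
      have f1 := Hr (a:ℕ) (b:ℕ) a.isLt b.isLt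
      have f2 := Hv (c:ℕ) (d:ℕ) c.isLt d.isLt
      linarith [f1.1, f1.2, f2.1, f2.2, Nat.zero_le (m * n), Nat.zero_le (m * (n - 1))]
    · have ha := a.isLt; have hb := b.isLt; have hc := c.isLt; have hd := d.isLt
      obtain ⟨hI, hJ⟩ := divmod_inj (by omega : m - 1 - (a:ℕ) < m) (by omega : m - 1 - (c:ℕ) < m) (Nat.add_left_cancel (Nat.add_right_cancel hxy))
      simp only [Sum.inl.injEq, Sum.inr.injEq, Prod.mk.injEq]
      exact ⟨Fin.ext (by omega), Fin.ext (by omega)⟩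
    · exfalso
      have f1 := Hr (a:ℕ) (b:ℕ) a.isLt b.isLt
      have f2 := Ha (c:ℕ) (d:ℕ) c.isLt d.isLt
      linarith [f1.1, f1.2, f2.1, f2.2, Nat.zero_le (m * n), Nat.zero_le (m * (n - 1))]
    · exfalso
      have f1 := Hr (a:ℕ) (b:ℕ) a.isLt b.isLt
      have f2 := Hb (c:ℕ) (d:ℕ) c.isLt d.isLt
      linarith [f1.1, f1.2, f2.1, f2.2, Nat.zero_le (m * n), Nat.zero_le (m * (n - 1))]
    · exfalso
      have f1 := Hr (a:ℕ) (b:ℕ) a.isLt b.isLt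
      have f2 := Hd (c:ℕ) (d:ℕ) c.isLt d.isLt
      linarith [f1.1, f1.2, f2.1, f2.2, Nat.zero_le (m * n), Nat.zero_le (m * (n - 1))]
    · exfalso
      have f1 := Ha (a:ℕ) (b:ℕ) a.isLt b.isLt
      have f2 := Hu (c:ℕ) (d:ℕ) c.isLt d.isLt
      linarith [f1.1, f1.2, f2.1, f2.2, Nat.zero_le (m * n), Nat.zero_le (m * (n - 1))]
    · exfalso
      have f1 := Ha (a:ℕ) (b:ℕ) a.isLt b.isLt
      have f2 := Hv (c:ℕ) (d:ℕ) c.isLt d.isLt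
      linarith [f1.1, f1.2, f2.1, f2.2, Nat.zero_le (m * n), Nat.zero_le (m * (n - 1))]
    · exfalso
      have f1 := Ha (a:ℕ) (b:ℕ) a.isLt b.isLt
      have f2 := Hr (c:ℕ) (d:ℕ) c.isLt d.isLt
      linarith [f1.1, f1.2, f2.1, f2.2, Nat.zero_le (m * n), Nat.zero_le (m * (n - 1))]
    · have ha := a.isLt; have hb := b.isLt; have hc := c.isLt; have hd := d.isLt
      obtain ⟨hI, hJ⟩ := divmod_inj (by omega : m - 1 - (a:ℕ) < m) (by omega : m - 1 - (c:ℕ) < m) (Nat.add_left_cancel (Nat.add_right_cancel hxy))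
      simp only [Sum.inl.injEq, Sum.inr.injEq, Prod.mk.injEq]
      exact ⟨Fin.ext (by omega), Fin.ext (by omega)⟩
    · exfalso
      have f1 := Ha (a:ℕ) (b:ℕ) a.isLt b.isLt
      have f2 := Hb (c:ℕ) (d:ℕ) c.isLt d.isLt
      linarith [f1.1, f1.2, f2.1, f2.2, Nat.zero_le (m * n), Nat.zero_le (m * (n - 1))]
    · exfalso
      have f1 := Ha (a:ℕ) (b:ℕ) a.isLt b.isLt
      have f2 := Hd (c:ℕ) (d:ℕ) c.isLt d.isLt
      linarith [f1.1, f1.2, f2.1, f2.2, Nat.zero_le (m * n), Nat.zero_le (m * (n - 1))]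
    · exfalso
      have f1 := Hb (a:ℕ) (b:ℕ) a.isLt b.isLt
      have f2 := Hu (c:ℕ) (d:ℕ) c.isLt d.isLt
      linarith [f1.1, f1.2, f2.1, f2.2, Nat.zero_le (m * n), Nat.zero_le (m * (n - 1))]
    · exfalso
      have f1 := Hb (a:ℕ) (b:ℕ) a.isLt b.isLt
      have f2 := Hv (c:ℕ) (d:ℕ) c.isLt d.isLt
      linarith [f1.1, f1.2, f2.1, f2.2, Nat.zero_le (m * n), Nat.zero_le (m * (n - 1))]
    · exfalso
      have f1 := Hb (a:ℕ) (b:ℕ) a.isLt b.isLt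
      have f2 := Hr (c:ℕ) (d:ℕ) c.isLt d.isLt
      linarith [f1.1, f1.2, f2.1, f2.2, Nat.zero_le (m * n), Nat.zero_le (m * (n - 1))]
    · exfalso
      have f1 := Hb (a:ℕ) (b:ℕ) a.isLt b.isLt
      have f2 := Ha (c:ℕ) (d:ℕ) c.isLt d.isLt
      linarith [f1.1, f1.2, f2.1, f2.2, Nat.zero_le (m * n), Nat.zero_le (m * (n - 1))]
    · have ha := a.isLt; have hb := b.isLt; have hc := c.isLt; have hd := d.isLt
      obtain ⟨hI, hJ⟩ := divmod_inj (by omega : m - 1 - (a:ℕ) < m) (by omega : m - 1 - (c:ℕ) < m) (Nat.add_left_cancel (Nat.add_right_cancel hxy))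
      simp only [Sum.inl.injEq, Sum.inr.injEq, Prod.mk.injEq]
      exact ⟨Fin.ext (by omega), Fin.ext (by omega)⟩
    · exfalso
      have f1 := Hb (a:ℕ) (b:ℕ) a.isLt b.isLt
      have f2 := Hd (c:ℕ) (d:ℕ) c.isLt d.isLt
      linarith [f1.1, f1.2, f2.1, f2.2, Nat.zero_le (m * n), Nat.zero_le (m * (n - 1))]
    · exfalso
      have f1 := Hd (a:ℕ) (b:ℕ) a.isLt b.isLt
      have f2 := Hu (c:ℕ) (d:ℕ) c.isLt d.isLt
      linarith [f1.1, f1.2, f2.1, f2.2, Nat.zero_le (m * n), Nat.zero_le (m * (n - 1))]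
    · exfalso
      have f1 := Hd (a:ℕ) (b:ℕ) a.isLt b.isLt
      have f2 := Hv (c:ℕ) (d:ℕ) c.isLt d.isLt
      linarith [f1.1, f1.2, f2.1, f2.2, Nat.zero_le (m * n), Nat.zero_le (m * (n - 1))]
    · exfalso
      have f1 := Hd (a:ℕ) (b:ℕ) a.isLt b.isLt
      have f2 := Hr (c:ℕ) (d:ℕ) c.isLt d.isLt
      linarith [f1.1, f1.2, f2.1, f2.2, Nat.zero_le (m * n), Nat.zero_le (m * (n - 1))]
    · exfalso
      have f1 := Hd (a:ℕ) (b:ℕ) a.isLt b.isLt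
      have f2 := Ha (c:ℕ) (d:ℕ) c.isLt d.isLt
      linarith [f1.1, f1.2, f2.1, f2.2, Nat.zero_le (m * n), Nat.zero_le (m * (n - 1))]
    · exfalso
      have f1 := Hd (a:ℕ) (b:ℕ) a.isLt b.isLt
      have f2 := Hb (c:ℕ) (d:ℕ) c.isLt d.isLt
      linarith [f1.1, f1.2, f2.1, f2.2, Nat.zero_le (m * n), Nat.zero_le (m * (n - 1))]
    · have ha := a.isLt; have hb := b.isLt; have hc := c.isLt; have hd := d.isLt
      obtain ⟨hI, hJ⟩ := divmod_inj (by omega : m - 1 - (a:ℕ) < m) (by omega : m - 1 - (c:ℕ) < m) (Nat.add_left_cancel (Nat.add_right_cancel hxy))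
      simp only [Sum.inl.injEq, Sum.inr.injEq, Prod.mk.injEq]
      exact ⟨Fin.ext (by omega), Fin.ext (by omega)⟩
  have hmem : ∀ x, lab m n x ∈ Set.Icc 1 (2 * m * n + m * (4 * n - 3)) := by
    intro x
    rcases x with ((⟨a,b⟩|⟨a,b⟩)|(⟨a,b⟩|(⟨a,b⟩|(⟨a,b⟩|⟨a,b⟩)))) <;> simp only [lab, Set.mem_Icc]
    · have f1 := Hu (a:ℕ) (b:ℕ) a.isLt b.isLt
      exact ⟨by linarith [f1.1, Nat.zero_le (m * n), Nat.zero_le (m * (n - 1))], by linarith [f1.2, e4, Nat.zero_le (m * n), Nat.zero_le (m * (n - 1))]⟩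
    · have f1 := Hv (a:ℕ) (b:ℕ) a.isLt b.isLt
      exact ⟨by linarith [f1.1, Nat.zero_le (m * n), Nat.zero_le (m * (n - 1))], by linarith [f1.2, e4, Nat.zero_le (m * n), Nat.zero_le (m * (n - 1))]⟩
    · have f1 := Hr (a:ℕ) (b:ℕ) a.isLt b.isLt
      exact ⟨by linarith [f1.1, Nat.zero_le (m * n), Nat.zero_le (m * (n - 1))], by linarith [f1.2, e4, Nat.zero_le (m * n), Nat.zero_le (m * (n - 1))]⟩
    · have f1 := Ha (a:ℕ) (b:ℕ) a.isLt b.isLt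
      exact ⟨by linarith [f1.1, Nat.zero_le (m * n), Nat.zero_le (m * (n - 1))], by linarith [f1.2, e4, Nat.zero_le (m * n), Nat.zero_le (m * (n - 1))]⟩
    · have f1 := Hb (a:ℕ) (b:ℕ) a.isLt b.isLt
      exact ⟨by linarith [f1.1, Nat.zero_le (m * n), Nat.zero_le (m * (n - 1))], by linarith [f1.2, e4, Nat.zero_le (m * n), Nat.zero_le (m * (n - 1))]⟩
    · have f1 := Hd (a:ℕ) (b:ℕ) a.isLt b.isLt
      exact ⟨by linarith [f1.1, Nat.zero_le (m * n), Nat.zero_le (m * (n - 1))], by linarith [f1.2, e4, Nat.zero_le (m * n), Nat.zero_le (m * (n - 1))]⟩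
  refine ⟨lab m n, hinj, ?_, ?_, ?_, ?_⟩
  · -- range
    have hsub : Set.range (lab m n) ⊆ Set.Icc 1 (2 * m * n + m * (4 * n - 3)) := by
      rintro t ⟨x, rfl⟩; exact hmem x
    refine Set.eq_of_subset_of_ncard_le hsub ?_ (Set.finite_Icc _ _)
    have h1 : (Set.Icc (1 : ℕ) (2 * m * n + m * (4 * n - 3))).ncard
        = 2 * m * n + m * (4 * n - 3) := by
      rw [← Finset.coe_Icc, Set.ncard_coe_finset, Nat.card_Icc, Nat.add_sub_cancel]
    have h2 : (Set.range (lab m n)).ncard = 3 * m * n + 3 * (m * (n - 1)) := by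
      rw [← Nat.card_coe_set_eq, Nat.card_range_of_injective hinj]
      simp only [Nat.card_eq_fintype_card, Fintype.card_sum, Fintype.card_prod, Fintype.card_fin]
      ring
    rw [h1, h2]
    linarith [e4]
  · -- vertex bound
    intro x
    rcases x with ⟨a, b⟩ | ⟨a, b⟩ <;> simp only [lab]
    · have f1 := Hu (a : ℕ) (b : ℕ) a.isLt b.isLt
      linarith [f1.2]
    · have f1 := Hv (a : ℕ) (b : ℕ) a.isLt b.isLt
      linarith [f1.2]
  · -- T1
    intro j i
    have hj := j.isLt; have hi := i.isLt
    simp only [lab]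
    have c1 : (i : ℕ) ≤ n - 1 := by omega
    have c2 : (i : ℕ) ≤ n - 2 := by omega
    have c3 : (j : ℕ) ≤ m - 1 := by omega
    have c0 : 1 ≤ m := by omega
    have c4 : 1 ≤ n := by omega
    have c5 : 2 ≤ n := by omega
    have c6 : 3 * m ≤ 14 * m * n := by
      have h7 : m * 1 ≤ m * n := Nat.mul_le_mul_left m (by omega)
      linarith
    zify [c0, c1, c2, c3, c4, c5, c6]
    ring
  · -- T2
    intro j i
    have hj := j.isLt; have hi := i.isLt
    simp only [lab]
    have c1 : (i : ℕ) ≤ n - 1 := by omega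
    have c1' : (i : ℕ) + 1 ≤ n - 1 := by omega
    have c2 : (i : ℕ) ≤ n - 2 := by omega
    have c3 : (j : ℕ) ≤ m - 1 := by omega
    have c0 : 1 ≤ m := by omega
    have c4 : 1 ≤ n := by omega
    have c5 : 2 ≤ n := by omega
    have c6 : 3 * m ≤ 14 * m * n := by
      have h7 : m * 1 ≤ m * n := Nat.mul_le_mul_left m (by omega)
      linarith
    zify [c0, c1, c1', c2, c3, c4, c5, c6]
    ring
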